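/- Let σ be a type of states, Λ a type of labels, and step : Λ → σ → σ → Prop a labeled transition relation. Define a run from a to b over a label list l inductively: over the empty list a run exists iff a = b; over r :: l' a run exists iff there is c with step r a c and a run from c to b over l'. Say labels r and r' are sequentially independent if whenever step r a b and step r' b c, there exists d with step r' a d and step r d c. Let r_src be a label and w a list of labels such that r_src is sequentially independent from every label occurring in w. If there exist states a, b, c with step r_src a b and a run from b to c over w, then there exists a state b' with a run from a to b' over w and step r_src b' c; that is, the r_src step can be shifted across the entire intermediate sequence toward the end, preserving the initial and final states. -/

import Mathlib

/-- A run from `a` to `b` over a list of labels. -/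
inductive Run {σ Λ : Type*} (step : Λ → σ → σ → Prop) : σ → List Λ → σ → Prop
  | nil (a : σ) : Run step a [] a
  | cons {a c b : σ} {r : Λ} {l : List Λ} :
      step r a c → Run step c l b → Run step a (r :: l) b

/-- Labels `r` and `r'` are sequentially independent if two consecutive steps
`r` then `r'` can be reversed, preserving endpoints. -/
def SeqIndep {σ Λ : Type*} (step : Λ → σ → σ → Prop) (r r' : Λ) : Prop :=
  ∀ a b c : σ, step r a b → step r' b c → ∃ d : σ, step r' a d ∧ step r d c

/-- Forward shifting lemma: a step of `r_src` can be shifted across an entire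
intermediate sequence `w` of labels, each of which is sequentially independent
from `r_src`, toward the end, preserving initial and final states. -/
theorem shift_source_forward {σ Λ : Type*} (step : Λ → σ → σ → Prop)
    (r_src : Λ) (w : List Λ)
    (hindep : ∀ r' ∈ w, SeqIndep step r_src r')
    (a b c : σ) (hstep : step r_src a b) (hrun : Run step b w c) :
    ∃ b' : σ, Run step a w b' ∧ step r_src b' c := by
  induction w generalizing a b with
  | nil => cases hrun; exact ⟨a, Run.nil a, hstep⟩
  | cons r l ih =>
    cases hrun with
    | cons h1 h2 =>
      obtain ⟨d, hd1, hd2⟩ := hindep r List.mem_cons_self a b _ hstep h1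
      obtain ⟨b', hb1, hb2⟩ := ih (fun r' hr' => hindep r' (List.mem_cons_of_mem r hr')) d _ hd2 h2
      exact ⟨b', Run.cons hd1 hb1, hb2⟩
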